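/- For every n ≥ 1 and every 1 ≤ i ≤ n, the following identity holds in the integral group algebra ℤ[𝔖_{n+1}]: (1 − t_i) · sh_{n+1} = (1 − t_i) · ∑_{B ⊆ {1,…,n}} D_i(σ_B), where t_i = (i, i+1) is the adjacent transposition and 1 is the identity of the group algebra. (This is the group-algebra identity underlying the paper's Proposition that the shuffle operator sh: As → As is a morphism of Lie-bimodules.) -/

import Mathlib

/-- The shuffle permutation `σ_A` associated to a subset `A ⊆ {1,…,n}`:
positions `1,…,|A|` are sent, in order, to the elements of `A` listed increasingly,
and positions `|A|+1,…,n` are sent, in order, to the elements of the complement of `A`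
listed increasingly.  (Here everything is 0-indexed, using `Fin n`.) -/
def shufflePerm {n : ℕ} (A : Finset (Fin n)) : Equiv.Perm (Fin n) :=
  (finCongr (show n = A.card + Aᶜ.card from by
      have h1 : A.card ≤ n := by simpa using Finset.card_le_univ A
      have h2 : Aᶜ.card = n - A.card := by simp [Finset.card_compl]
      omega)).trans <|
  finSumFinEquiv.symm.trans <|
  (Equiv.sumCongr (A.orderIsoOfFin rfl).toEquiv
      ((Aᶜ.orderIsoOfFin rfl).toEquiv.trans
        (Equiv.subtypeEquivRight fun _ => Finset.mem_compl))).trans <|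
  Equiv.sumCompl (· ∈ A)

/-- The inflation `D_i(σ) ∈ 𝔖_{n+1}` of a permutation `σ ∈ 𝔖_n`: in the one-line word of
`σ`, every letter `ℓ > i` is replaced by `ℓ+1` and the letter `i` is replaced by the two
consecutive letters `i, i+1`.  (0-indexed: `i : Fin n`, and the two consecutive letters are
`i.castSucc, i.succ` in `Fin (n+1)`.)  This is the operadic composition `σ ∘_i m_2` in the
associative operad. -/
def inflate {n : ℕ} (σ : Equiv.Perm (Fin n)) (i : Fin n) : Equiv.Perm (Fin (n + 1)) :=
  (finSuccEquiv' ((σ⁻¹ i).succ)).trans ((Equiv.optionCongr σ).trans (finSuccEquiv' i.succ).symm)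

/-- The subset `B′_i(B) ⊆ {1,…,n+1}`: elements of `B` below `i` are kept, elements of `B`
above `i` are shifted up by one, and if `i ∈ B` then both `i` and `i+1` are included.
(0-indexed via `Fin.castSucc` and `Fin.succ`.) -/
def inflateSet {n : ℕ} (B : Finset (Fin n)) (i : Fin n) : Finset (Fin (n + 1)) :=
  ((B.filter (· < i)).image Fin.castSucc) ∪ ((B.filter (i < ·)).image Fin.succ) ∪
    (if i ∈ B then {i.castSucc, i.succ} else ∅)

variable {m : ℕ}

lemma card_add_card_compl (A : Finset (Fin m)) : A.card + Aᶜ.card = m := by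
  have h1 : A.card ≤ m := by simpa using Finset.card_le_univ A
  have h2 : Aᶜ.card = m - A.card := by simp [Finset.card_compl]
  omega

lemma shufflePerm_apply_lt (A : Finset (Fin m)) (k : Fin m) (h : (k : ℕ) < A.card) :
    shufflePerm A k = A.orderEmbOfFin rfl ⟨k, h⟩ := by
  have hk : finCongr (show m = A.card + Aᶜ.card from ((card_add_card_compl A).symm)) k
      = Fin.castAdd Aᶜ.card ⟨(k : ℕ), h⟩ := by
    ext; simp
  simp only [shufflePerm, Equiv.trans_apply]
  rw [hk, finSumFinEquiv_symm_apply_castAdd]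
  simp

lemma shufflePerm_apply_ge (A : Finset (Fin m)) (k : Fin m) (h : A.card ≤ (k : ℕ)) :
    shufflePerm A k = Aᶜ.orderEmbOfFin rfl
      ⟨(k : ℕ) - A.card, by have := card_add_card_compl A; omega⟩ := by
  have hk : finCongr (show m = A.card + Aᶜ.card from ((card_add_card_compl A).symm)) k
      = Fin.natAdd A.card ⟨(k : ℕ) - A.card, by have := card_add_card_compl A; omega⟩ := by
    ext; simp; omega
  simp only [shufflePerm, Equiv.trans_apply]
  rw [hk, finSumFinEquiv_symm_apply_natAdd]
  simp

lemma shufflePerm_mem_iff (A : Finset (Fin m)) (k : Fin m) :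
    shufflePerm A k ∈ A ↔ (k : ℕ) < A.card := by
  constructor
  · intro hmem
    by_contra h
    rw [shufflePerm_apply_ge A k (le_of_not_gt h)] at hmem
    have := Finset.orderEmbOfFin_mem Aᶜ rfl
      ⟨(k : ℕ) - A.card, by have := card_add_card_compl A; omega⟩
    rw [Finset.mem_compl] at this
    exact this hmem
  · intro h
    rw [shufflePerm_apply_lt A k h]
    exact Finset.orderEmbOfFin_mem A rfl _

lemma shufflePerm_lt_of_lt (A : Finset (Fin m)) (k l : Fin m) (hkl : (k : ℕ) < (l : ℕ))
    (hl : (l : ℕ) < A.card) : shufflePerm A k < shufflePerm A l := by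
  rw [shufflePerm_apply_lt A k (hkl.trans hl), shufflePerm_apply_lt A l hl]
  exact (A.orderEmbOfFin rfl).strictMono (by exact hkl)

lemma shufflePerm_lt_of_ge (A : Finset (Fin m)) (k l : Fin m) (hk : A.card ≤ (k : ℕ))
    (hkl : (k : ℕ) < (l : ℕ)) : shufflePerm A k < shufflePerm A l := by
  rw [shufflePerm_apply_ge A k hk, shufflePerm_apply_ge A l (hk.trans hkl.le)]
  exact (Aᶜ.orderEmbOfFin rfl).strictMono (by simp [Fin.lt_def]; omega)

lemma shufflePerm_unique (A : Finset (Fin m)) (π : Equiv.Perm (Fin m))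
    (h1 : ∀ k : Fin m, (k : ℕ) < A.card → π k ∈ A)
    (h2 : ∀ k l : Fin m, (k : ℕ) < (l : ℕ) → (l : ℕ) < A.card → π k < π l)
    (h3 : ∀ k : Fin m, A.card ≤ (k : ℕ) → π k ∉ A)
    (h4 : ∀ k l : Fin m, A.card ≤ (k : ℕ) → (k : ℕ) < (l : ℕ) → π k < π l) :
    π = shufflePerm A := by
  have hcard := card_add_card_compl A
  apply Equiv.ext; intro k
  rcases lt_or_ge (k : ℕ) A.card with h | h
  · have key : (fun j : Fin A.card => π ⟨(j : ℕ), by omega⟩) = A.orderEmbOfFin rfl := by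
      apply Finset.orderEmbOfFin_unique rfl
      · intro x; exact h1 _ x.2
      · intro x y hxy; exact h2 _ _ hxy y.2
    rw [shufflePerm_apply_lt A k h]
    have := congrFun key ⟨(k : ℕ), h⟩
    simpa using this
  · have key : (fun j : Fin Aᶜ.card => π ⟨A.card + (j : ℕ), by omega⟩)
        = Aᶜ.orderEmbOfFin rfl := by
      apply Finset.orderEmbOfFin_unique rfl
      · intro x
        rw [Finset.mem_compl]
        exact h3 _ (by simp)
      · intro x y hxy
        exact h4 _ _ (by simp) (by simpa using hxy)
    rw [shufflePerm_apply_ge A k h]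
    have := congrFun key ⟨(k : ℕ) - A.card, by omega⟩
    rw [← this]
    congr 1
    ext
    simp
    omega

lemma swap_lt_swap {c s x y : Fin m} (hs : (s : ℕ) = (c : ℕ) + 1) (hlt : x < y)
    (hne : ¬(x = c ∧ y = s)) : Equiv.swap c s x < Equiv.swap c s y := by
  rcases eq_or_ne x c with rfl | hxc
  · rw [Equiv.swap_apply_left]
    rcases eq_or_ne y s with rfl | hys
    · exact absurd ⟨rfl, rfl⟩ hne
    · rw [Equiv.swap_apply_of_ne_of_ne hlt.ne' hys]
      simp only [Fin.lt_def, Fin.ext_iff, ne_eq] at *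
      omega
  rcases eq_or_ne x s with rfl | hxs
  · have hyc : y ≠ c := by
      simp only [Fin.lt_def, Fin.ext_iff, ne_eq] at *
      omega
    rw [Equiv.swap_apply_right, Equiv.swap_apply_of_ne_of_ne hyc hlt.ne']
    simp only [Fin.lt_def, Fin.ext_iff, ne_eq] at *
    omega
  rw [Equiv.swap_apply_of_ne_of_ne hxc hxs]
  rcases eq_or_ne y c with rfl | hyc
  · rw [Equiv.swap_apply_left]
    simp only [Fin.lt_def, Fin.ext_iff, ne_eq] at *
    omega
  rcases eq_or_ne y s with rfl | hys
  · rw [Equiv.swap_apply_right]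
    simp only [Fin.lt_def, Fin.ext_iff, ne_eq] at *
    omega
  · rw [Equiv.swap_apply_of_ne_of_ne hyc hys]
    exact hlt

lemma shufflePerm_image_swap {c s : Fin m} (hs : (s : ℕ) = (c : ℕ) + 1) (A : Finset (Fin m))
    (hone : (c ∈ A ∧ s ∉ A) ∨ (c ∉ A ∧ s ∈ A)) :
    shufflePerm (A.image (Equiv.swap c s)) = Equiv.swap c s * shufflePerm A := by
  have hinj : Function.Injective (Equiv.swap c s) := (Equiv.swap c s).injective
  have hcard : (A.image (Equiv.swap c s)).card = A.card :=
    Finset.card_image_of_injective _ hinj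
  symm
  apply shufflePerm_unique
  · intro k hk
    rw [hcard] at hk
    exact Finset.mem_image_of_mem _ ((shufflePerm_mem_iff A k).mpr hk)
  · intro k l hkl hl
    rw [hcard] at hl
    simp only [Equiv.Perm.coe_mul, Function.comp_apply]
    apply swap_lt_swap hs (shufflePerm_lt_of_lt A k l hkl hl)
    rintro ⟨h1, h2⟩
    have m1 : shufflePerm A k ∈ A := (shufflePerm_mem_iff A k).mpr (hkl.trans hl)
    have m2 : shufflePerm A l ∈ A := (shufflePerm_mem_iff A l).mpr hl
    rw [h1] at m1; rw [h2] at m2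
    rcases hone with ⟨_, h⟩ | ⟨h, _⟩ <;> exact h (by assumption)
  · intro k hk
    rw [hcard] at hk
    simp only [Equiv.Perm.coe_mul, Function.comp_apply]
    intro hmem
    obtain ⟨a, ha, hae⟩ := Finset.mem_image.mp hmem
    have : a = shufflePerm A k := hinj hae
    rw [this] at ha
    exact ((shufflePerm_mem_iff A k).mp ha).not_ge hk
  · intro k l hk hkl
    rw [hcard] at hk
    simp only [Equiv.Perm.coe_mul, Function.comp_apply]
    apply swap_lt_swap hs (shufflePerm_lt_of_ge A k l hk hkl)
    rintro ⟨h1, h2⟩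
    have m1 : shufflePerm A k ∉ A := fun h => ((shufflePerm_mem_iff A k).mp h).not_ge hk
    have m2 : shufflePerm A l ∉ A := fun h =>
      ((shufflePerm_mem_iff A l).mp h).not_ge (hk.trans hkl.le)
    rw [h1] at m1; rw [h2] at m2
    rcases hone with ⟨h, _⟩ | ⟨_, h⟩ <;> exact (by assumption : ¬_) h

variable {n : ℕ}

lemma succAbove_succ_of_le (i : Fin n) (ℓ : Fin n) (h : ℓ ≤ i) :
    (i.succ).succAbove ℓ = ℓ.castSucc :=
  Fin.succAbove_of_castSucc_lt _ _ (by
    rw [Fin.lt_def]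
    simp only [Fin.coe_castSucc, Fin.val_succ]
    exact Nat.lt_succ_of_le h)

lemma succAbove_succ_of_gt (i : Fin n) (ℓ : Fin n) (h : i < ℓ) :
    (i.succ).succAbove ℓ = ℓ.succ :=
  Fin.succAbove_of_le_castSucc _ _ (by
    rw [Fin.le_def]
    simp only [Fin.coe_castSucc, Fin.val_succ]
    exact Nat.succ_le_of_lt h)

lemma mem_inflateSet_iff {B : Finset (Fin n)} {i : Fin n} (x : Fin (n + 1)) :
    x ∈ inflateSet B i ↔ (∃ ℓ ∈ B, x = (i.succ).succAbove ℓ) ∨ (i ∈ B ∧ x = i.succ) := by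
  unfold inflateSet
  simp only [Finset.mem_union, Finset.mem_image, Finset.mem_filter]
  constructor
  · rintro ((⟨a, ⟨ha, hai⟩, rfl⟩ | ⟨a, ⟨ha, hai⟩, rfl⟩) | hx)
    · exact Or.inl ⟨a, ha, (succAbove_succ_of_le i a hai.le).symm⟩
    · exact Or.inl ⟨a, ha, (succAbove_succ_of_gt i a hai).symm⟩
    · split_ifs at hx with hiB
      · rcases Finset.mem_insert.mp hx with rfl | hx
        · exact Or.inl ⟨i, hiB, (succAbove_succ_of_le i i le_rfl).symm⟩
        · rw [Finset.mem_singleton] at hx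
          exact Or.inr ⟨hiB, hx⟩
      · simp at hx
  · rintro (⟨ℓ, hℓ, rfl⟩ | ⟨hiB, rfl⟩)
    · rcases lt_trichotomy ℓ i with h | rfl | h
      · rw [succAbove_succ_of_le i ℓ h.le]
        exact Or.inl (Or.inl ⟨ℓ, ⟨hℓ, h⟩, rfl⟩)
      · rw [succAbove_succ_of_le ℓ ℓ le_rfl]
        right
        simp [hℓ]
      · rw [succAbove_succ_of_gt i ℓ h]
        exact Or.inl (Or.inr ⟨ℓ, ⟨hℓ, h⟩, rfl⟩)
    · right
      simp [hiB]

lemma succAbove_mem_inflateSet_iff {B : Finset (Fin n)} {i : Fin n} (ℓ : Fin n) :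
    (i.succ).succAbove ℓ ∈ inflateSet B i ↔ ℓ ∈ B := by
  rw [mem_inflateSet_iff]
  constructor
  · rintro (⟨a, ha, hae⟩ | ⟨_, he⟩)
    · have : ℓ = a := Fin.succAbove_right_injective (p := i.succ) hae
      rwa [this]
    · exact absurd he (Fin.succAbove_ne i.succ ℓ)
  · intro h
    exact Or.inl ⟨ℓ, h, rfl⟩

lemma succ_mem_inflateSet_iff {B : Finset (Fin n)} {i : Fin n} :
    i.succ ∈ inflateSet B i ↔ i ∈ B := by
  rw [mem_inflateSet_iff]
  constructor
  · rintro (⟨a, _, hae⟩ | ⟨h, _⟩)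
    · exact absurd hae.symm (Fin.succAbove_ne i.succ a)
    · exact h
  · intro h
    exact Or.inr ⟨h, rfl⟩

lemma inflateSet_eq (B : Finset (Fin n)) (i : Fin n) :
    inflateSet B i = (B.image (i.succ).succAbove) ∪ (if i ∈ B then {i.succ} else ∅) := by
  ext x
  rw [mem_inflateSet_iff]
  simp only [Finset.mem_union, Finset.mem_image]
  split_ifs with hiB <;> simp [hiB, eq_comm, and_comm]

lemma card_inflateSet (B : Finset (Fin n)) (i : Fin n) :
    (inflateSet B i).card = B.card + if i ∈ B then 1 else 0 := by
  rw [inflateSet_eq]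
  have himg : (B.image (i.succ).succAbove).card = B.card :=
    Finset.card_image_of_injective _ (Fin.succAbove_right_injective)
  split_ifs with hiB
  · rw [Finset.union_comm, ← Finset.insert_eq, Finset.card_insert_of_notMem, himg]
    intro hmem
    obtain ⟨a, _, ha⟩ := Finset.mem_image.mp hmem
    exact Fin.succAbove_ne i.succ a ha
  · simp [himg]

lemma inflate_apply_anchor (σ : Equiv.Perm (Fin n)) (i : Fin n) :
    inflate σ i ((σ⁻¹ i).succ) = i.succ := by
  simp [inflate, finSuccEquiv'_at]

lemma inflate_apply_succAbove (σ : Equiv.Perm (Fin n)) (i : Fin n) (j : Fin n) :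
    inflate σ i (((σ⁻¹ i).succ).succAbove j) = (i.succ).succAbove (σ j) := by
  simp [inflate, finSuccEquiv'_succAbove]

lemma val_succAbove (p : Fin (n + 1)) (j : Fin n) :
    ((p.succAbove j : Fin (n + 1)) : ℕ) = if (j : ℕ) < (p : ℕ) then (j : ℕ) else (j : ℕ) + 1 := by
  rcases lt_or_ge ((j : ℕ)) ((p : ℕ)) with h | h
  · rw [Fin.succAbove_of_castSucc_lt _ _ (by rwa [Fin.lt_def]), if_pos h]
    rfl
  · rw [Fin.succAbove_of_le_castSucc _ _ (by rwa [Fin.le_def]), if_neg (not_lt.mpr h)]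
    rfl

lemma succAbove_succ_lt_succ (i : Fin n) (x : Fin n) (h : x ≤ i) :
    (i.succ).succAbove x < i.succ := by
  rw [Fin.lt_def, val_succAbove]
  simp only [Fin.val_succ]
  split_ifs <;> omega

lemma succ_lt_succAbove_succ (i : Fin n) (x : Fin n) (h : i < x) :
    i.succ < (i.succ).succAbove x := by
  rw [Fin.lt_def, val_succAbove]
  simp only [Fin.val_succ]
  have : (i : ℕ) < (x : ℕ) := h
  split_ifs <;> omega

theorem inflate_shufflePerm (B : Finset (Fin n)) (i : Fin n) :
    inflate (shufflePerm B) i = shufflePerm (inflateSet B i) := by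
  set σ := shufflePerm B with hσdef
  set m : Fin n := σ⁻¹ i with hmdef
  have hσm : σ m = i := Equiv.apply_symm_apply σ i
  have hiB : i ∈ B ↔ (m : ℕ) < B.card := by
    conv_lhs => rw [← hσm]
    exact shufflePerm_mem_iff B m
  have hmem : ∀ j : Fin n, σ j ∈ B ↔ (j : ℕ) < B.card := fun j => shufflePerm_mem_iff B j
  have hlt1 : ∀ k l : Fin n, (k : ℕ) < (l : ℕ) → (l : ℕ) < B.card → σ k < σ l :=
    shufflePerm_lt_of_lt B
  have hlt2 : ∀ k l : Fin n, B.card ≤ (k : ℕ) → (k : ℕ) < (l : ℕ) → σ k < σ l :=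
    shufflePerm_lt_of_ge B
  have hcard := card_inflateSet B i
  apply shufflePerm_unique
  · -- membership, lower part
    intro k hk
    rw [hcard] at hk
    rcases eq_or_ne k m.succ with rfl | hk0
    · rw [inflate_apply_anchor, succ_mem_inflateSet_iff]
      by_contra hib
      have hmb : ¬(m : ℕ) < B.card := fun hh => hib (hiB.mpr hh)
      rw [if_neg hib] at hk
      simp only [Fin.val_succ] at hk
      omega
    · obtain ⟨j, rfl⟩ := Fin.exists_succAbove_eq hk0
      rw [inflate_apply_succAbove, succAbove_mem_inflateSet_iff, hmem]
      rw [val_succAbove] at hk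
      simp only [Fin.val_succ] at hk
      by_cases hib : i ∈ B
      · have hmb := hiB.mp hib
        rw [if_pos hib] at hk
        split_ifs at hk <;> omega
      · have hmb : ¬(m : ℕ) < B.card := fun hh => hib (hiB.mpr hh)
        rw [if_neg hib] at hk
        split_ifs at hk <;> omega
  · -- strict monotonicity, lower part
    intro k l hkl hl
    rw [hcard] at hl
    rcases eq_or_ne k m.succ with rfl | hk0
    · rcases eq_or_ne l m.succ with rfl | hl0
      · exact absurd hkl (lt_irrefl _)
      · obtain ⟨j, rfl⟩ := Fin.exists_succAbove_eq hl0
        rw [inflate_apply_anchor, inflate_apply_succAbove]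
        rw [val_succAbove] at hkl hl
        simp only [Fin.val_succ] at hkl hl
        have hjm : (m : ℕ) < (j : ℕ) := by split_ifs at hkl <;> omega
        apply succ_lt_succAbove_succ
        by_cases hib : i ∈ B
        · have hmb := hiB.mp hib
          rw [if_pos hib] at hl
          have hjb : (j : ℕ) < B.card := by split_ifs at hl <;> omega
          have := hlt1 m j hjm hjb
          rwa [hσm] at this
        · have hmb : ¬(m : ℕ) < B.card := fun hh => hib (hiB.mpr hh)
          rw [if_neg hib] at hl
          exfalso
          split_ifs at hl <;> omega
    · obtain ⟨j, rfl⟩ := Fin.exists_succAbove_eq hk0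
      rcases eq_or_ne l m.succ with rfl | hl0
      · rw [inflate_apply_succAbove, inflate_apply_anchor]
        rw [val_succAbove] at hkl
        simp only [Fin.val_succ] at hkl hl
        have hjm : (j : ℕ) ≤ (m : ℕ) := by split_ifs at hkl <;> omega
        apply succAbove_succ_lt_succ
        rcases eq_or_lt_of_le hjm with heq | hlt
        · have hje : j = m := Fin.ext heq
          rw [hje, hσm]
        · by_cases hib : i ∈ B
          · have hmb := hiB.mp hib
            have := hlt1 j m hlt hmb
            rw [hσm] at this
            exact this.le
          · have hmb : ¬(m : ℕ) < B.card := fun hh => hib (hiB.mpr hh)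
            rw [if_neg hib] at hl
            exfalso
            omega
      · obtain ⟨j2, rfl⟩ := Fin.exists_succAbove_eq hl0
        rw [inflate_apply_succAbove, inflate_apply_succAbove]
        rw [val_succAbove, val_succAbove] at hkl
        rw [val_succAbove] at hl
        simp only [Fin.val_succ] at hkl hl
        have hj12 : (j : ℕ) < (j2 : ℕ) := by split_ifs at hkl <;> omega
        apply Fin.strictMono_succAbove i.succ
        by_cases hib : i ∈ B
        · have hmb := hiB.mp hib
          rw [if_pos hib] at hl
          have hjb : (j2 : ℕ) < B.card := by split_ifs at hl <;> omega
          exact hlt1 j j2 hj12 hjb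
        · have hmb : ¬(m : ℕ) < B.card := fun hh => hib (hiB.mpr hh)
          rw [if_neg hib] at hl
          have hjb : (j2 : ℕ) < B.card := by split_ifs at hl <;> omega
          exact hlt1 j j2 hj12 hjb
  · -- membership, upper part
    intro k hk
    rw [hcard] at hk
    rcases eq_or_ne k m.succ with rfl | hk0
    · rw [inflate_apply_anchor, succ_mem_inflateSet_iff]
      intro hib
      have hmb := hiB.mp hib
      rw [if_pos hib] at hk
      simp only [Fin.val_succ] at hk
      omega
    · obtain ⟨j, rfl⟩ := Fin.exists_succAbove_eq hk0
      rw [inflate_apply_succAbove, succAbove_mem_inflateSet_iff, hmem]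
      rw [val_succAbove] at hk
      simp only [Fin.val_succ] at hk
      intro hjb
      by_cases hib : i ∈ B
      · have hmb := hiB.mp hib
        rw [if_pos hib] at hk
        split_ifs at hk <;> omega
      · have hmb : ¬(m : ℕ) < B.card := fun hh => hib (hiB.mpr hh)
        rw [if_neg hib] at hk
        split_ifs at hk <;> omega
  · -- strict monotonicity, upper part
    intro k l hk hkl
    rw [hcard] at hk
    rcases eq_or_ne k m.succ with rfl | hk0
    · rcases eq_or_ne l m.succ with rfl | hl0
      · exact absurd hkl (lt_irrefl _)
      · obtain ⟨j, rfl⟩ := Fin.exists_succAbove_eq hl0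
        rw [inflate_apply_anchor, inflate_apply_succAbove]
        rw [val_succAbove] at hkl
        simp only [Fin.val_succ] at hkl hk
        have hjm : (m : ℕ) < (j : ℕ) := by split_ifs at hkl <;> omega
        apply succ_lt_succAbove_succ
        by_cases hib : i ∈ B
        · have hmb := hiB.mp hib
          rw [if_pos hib] at hk
          exfalso
          omega
        · have hmb : ¬(m : ℕ) < B.card := fun hh => hib (hiB.mpr hh)
          have := hlt2 m j (by omega) hjm
          rwa [hσm] at this
    · obtain ⟨j, rfl⟩ := Fin.exists_succAbove_eq hk0
      rcases eq_or_ne l m.succ with rfl | hl0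
      · rw [inflate_apply_succAbove, inflate_apply_anchor]
        rw [val_succAbove] at hkl hk
        simp only [Fin.val_succ] at hkl hk
        have hjm : (j : ℕ) ≤ (m : ℕ) := by split_ifs at hkl <;> omega
        apply succAbove_succ_lt_succ
        rcases eq_or_lt_of_le hjm with heq | hlt
        · have hje : j = m := Fin.ext heq
          rw [hje, hσm]
        · by_cases hib : i ∈ B
          · have hmb := hiB.mp hib
            rw [if_pos hib] at hk
            exfalso
            split_ifs at hk <;> omega
          · have hmb : ¬(m : ℕ) < B.card := fun hh => hib (hiB.mpr hh)
            rw [if_neg hib] at hk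
            have hbj : B.card ≤ (j : ℕ) := by split_ifs at hk <;> omega
            have := hlt2 j m hbj hlt
            rw [hσm] at this
            exact this.le
      · obtain ⟨j2, rfl⟩ := Fin.exists_succAbove_eq hl0
        rw [inflate_apply_succAbove, inflate_apply_succAbove]
        rw [val_succAbove, val_succAbove] at hkl
        rw [val_succAbove] at hk
        simp only [Fin.val_succ] at hkl hk
        have hj12 : (j : ℕ) < (j2 : ℕ) := by split_ifs at hkl <;> omega
        apply Fin.strictMono_succAbove i.succ
        by_cases hib : i ∈ B
        · have hmb := hiB.mp hib
          rw [if_pos hib] at hk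
          have hbj : B.card ≤ (j : ℕ) := by split_ifs at hk <;> omega
          exact hlt2 j j2 hbj hj12
        · have hmb : ¬(m : ℕ) < B.card := fun hh => hib (hiB.mpr hh)
          rw [if_neg hib] at hk
          have hbj : B.card ≤ (j : ℕ) := by split_ifs at hk <;> omega
          exact hlt2 j j2 hbj hj12

lemma deflate_inflateSet (B : Finset (Fin n)) (i : Fin n) :
    Finset.univ.filter (fun ℓ => (i.succ).succAbove ℓ ∈ inflateSet B i) = B := by
  ext ℓ
  simp [succAbove_mem_inflateSet_iff]

lemma inflateSet_deflate {A : Finset (Fin (n + 1))} {i : Fin n}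
    (hbal : (i.castSucc ∈ A ↔ i.succ ∈ A)) :
    inflateSet (Finset.univ.filter (fun ℓ => (i.succ).succAbove ℓ ∈ A)) i = A := by
  ext x
  rcases eq_or_ne x i.succ with rfl | hx
  · rw [succ_mem_inflateSet_iff]
    simp only [Finset.mem_filter, Finset.mem_univ, true_and]
    rw [succAbove_succ_of_le i i le_rfl]
    exact hbal
  · obtain ⟨ℓ, rfl⟩ := Fin.exists_succAbove_eq hx
    rw [succAbove_mem_inflateSet_iff]
    simp

lemma inflateSet_balanced (B : Finset (Fin n)) (i : Fin n) :
    (i.castSucc ∈ inflateSet B i ↔ i.succ ∈ inflateSet B i) := by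
  rw [succ_mem_inflateSet_iff, ← succAbove_succ_of_le i i le_rfl,
    succAbove_mem_inflateSet_iff]

lemma mem_image_swap {c s x : Fin m} (A : Finset (Fin m)) :
    x ∈ A.image (Equiv.swap c s) ↔ Equiv.swap c s x ∈ A := by
  rw [Finset.mem_image]
  constructor
  · rintro ⟨a, ha, rfl⟩
    rwa [Equiv.swap_apply_self]
  · intro h
    exact ⟨_, h, Equiv.swap_apply_self _ _ _⟩

lemma image_swap_image_swap (A : Finset (Fin m)) (c s : Fin m) :
    (A.image (Equiv.swap c s)).image (Equiv.swap c s) = A := by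
  ext x
  rw [mem_image_swap, mem_image_swap, Equiv.swap_apply_self]


/-- The shuffle element `sh_n = ∑_{A ⊆ {1,…,n}} σ_A` of the integral group algebra
`ℤ[𝔖_n]`. -/
noncomputable def sh (n : ℕ) : MonoidAlgebra ℤ (Equiv.Perm (Fin n)) :=
  ∑ A : Finset (Fin n), MonoidAlgebra.of ℤ (Equiv.Perm (Fin n)) (shufflePerm A)

/-- In `ℤ[𝔖_{n+1}]`:
`(1 − t_i) · sh_{n+1} = (1 − t_i) · ∑_{B ⊆ {1,…,n}} D_i(σ_B)`. -/
theorem one_sub_swap_mul_sh {n : ℕ} (i : Fin n) :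
    (1 - MonoidAlgebra.of ℤ (Equiv.Perm (Fin (n + 1))) (Equiv.swap i.castSucc i.succ)) *
        sh (n + 1) =
      (1 - MonoidAlgebra.of ℤ (Equiv.Perm (Fin (n + 1))) (Equiv.swap i.castSucc i.succ)) *
        ∑ B : Finset (Fin n),
          MonoidAlgebra.of ℤ (Equiv.Perm (Fin (n + 1))) (inflate (shufflePerm B) i) := by
  classical
  have hsc : ((i.succ : Fin (n + 1)) : ℕ) = ((i.castSucc : Fin (n + 1)) : ℕ) + 1 := by simp
  have hsplit : sh (n + 1)
      = (∑ A ∈ Finset.univ.filter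
            (fun A : Finset (Fin (n + 1)) => (i.castSucc ∈ A ↔ i.succ ∈ A)),
          MonoidAlgebra.of ℤ (Equiv.Perm (Fin (n + 1))) (shufflePerm A))
        + (∑ A ∈ Finset.univ.filter
            (fun A : Finset (Fin (n + 1)) => ¬(i.castSucc ∈ A ↔ i.succ ∈ A)),
          MonoidAlgebra.of ℤ (Equiv.Perm (Fin (n + 1))) (shufflePerm A)) := by
    rw [sh, ← Finset.sum_filter_add_sum_filter_not Finset.univ
      (fun A : Finset (Fin (n + 1)) => (i.castSucc ∈ A ↔ i.succ ∈ A))]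
  have hbal : (∑ A ∈ Finset.univ.filter
            (fun A : Finset (Fin (n + 1)) => (i.castSucc ∈ A ↔ i.succ ∈ A)),
          MonoidAlgebra.of ℤ (Equiv.Perm (Fin (n + 1))) (shufflePerm A))
      = ∑ B : Finset (Fin n),
          MonoidAlgebra.of ℤ (Equiv.Perm (Fin (n + 1))) (inflate (shufflePerm B) i) := by
    symm
    refine Finset.sum_nbij' (fun B => inflateSet B i)
      (fun A => Finset.univ.filter fun ℓ => (i.succ).succAbove ℓ ∈ A) ?_ ?_ ?_ ?_ ?_
    · intro B _
      simp only [Finset.mem_filter, Finset.mem_univ, true_and]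
      exact inflateSet_balanced B i
    · intro A _
      exact Finset.mem_univ _
    · intro B _
      exact deflate_inflateSet B i
    · intro A hA
      rw [Finset.mem_filter] at hA
      exact inflateSet_deflate hA.2
    · intro B _
      rw [inflate_shufflePerm]
  set S := (∑ A ∈ Finset.univ.filter
      (fun A : Finset (Fin (n + 1)) => ¬(i.castSucc ∈ A ↔ i.succ ∈ A)),
    MonoidAlgebra.of ℤ (Equiv.Perm (Fin (n + 1))) (shufflePerm A)) with hS
  have hswapS : MonoidAlgebra.of ℤ (Equiv.Perm (Fin (n + 1)))
      (Equiv.swap i.castSucc i.succ) * S = S := by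
    rw [hS, Finset.mul_sum]
    symm
    refine Finset.sum_nbij' (fun A => A.image (Equiv.swap i.castSucc i.succ))
      (fun A => A.image (Equiv.swap i.castSucc i.succ)) ?_ ?_ ?_ ?_ ?_
    · intro A hA
      rw [Finset.mem_filter] at hA ⊢
      refine ⟨Finset.mem_univ _, ?_⟩
      simp only [mem_image_swap, Equiv.swap_apply_left, Equiv.swap_apply_right]
      tauto
    · intro A hA
      rw [Finset.mem_filter] at hA ⊢
      refine ⟨Finset.mem_univ _, ?_⟩
      simp only [mem_image_swap, Equiv.swap_apply_left, Equiv.swap_apply_right]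
      tauto
    · intro A _
      exact image_swap_image_swap A _ _
    · intro A _
      exact image_swap_image_swap A _ _
    · intro A hA
      rw [Finset.mem_filter] at hA
      have hone : (i.castSucc ∈ A ∧ i.succ ∉ A) ∨ (i.castSucc ∉ A ∧ i.succ ∈ A) := by
        tauto
      rw [shufflePerm_image_swap hsc A hone, map_mul, ← mul_assoc, ← map_mul,
        Equiv.swap_mul_self, map_one, one_mul]
  rw [hsplit, hbal, mul_add]
  have hz : (1 - MonoidAlgebra.of ℤ (Equiv.Perm (Fin (n + 1)))
      (Equiv.swap i.castSucc i.succ)) * S = 0 := by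
    rw [sub_mul, one_mul, hswapS, sub_self]
  rw [hz, add_zero]
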